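/- For distinct integers m, n ≥ 3, the system λ(m-2)(3m²-m-2+c(m+2)) = (m-1)(m+1) and λ(n+2)(3n²+n-2+c(2-n)) = (1+n)(1-n) has exactly one common solution (c,λ) ∈ ℂ², namely c = -(m-1)(n+1)(n-m+mn)/(m-n) and λ = -(m-n)/((m-2)(n+2)(2n-2m+mn)). -/

import Mathlib

/-- For distinct `m, n ≥ 3`, the truncation curve of `W^{k'}(sl_m, f_prin)` and the
(conjectural) truncation curve of the W-algebra of `sl_{-n}` intersect in exactly
one point. -/
theorem stmt12 (m n : ℕ) (hm : 3 ≤ m) (hn : 3 ≤ n) (hmn : m ≠ n) (c l : ℂ) :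
    (l*((m:ℂ)-2)*(3*(m:ℂ)^2-m-2+c*((m:ℂ)+2)) = ((m:ℂ)-1)*((m:ℂ)+1) ∧
     l*((n:ℂ)+2)*(3*(n:ℂ)^2+n-2+c*(2-(n:ℂ))) = (1+(n:ℂ))*(1-(n:ℂ))) ↔
    (c = -(((m:ℂ)-1)*((n:ℂ)+1)*((n:ℂ)-m+m*n))/((m:ℂ)-n) ∧
     l = -((m:ℂ)-n)/(((m:ℂ)-2)*((n:ℂ)+2)*(2*(n:ℂ)-2*m+m*n))) := by
  have hM2 : (m:ℂ) - 2 ≠ 0 := by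
    intro h
    have h2 : (m:ℂ) = ((2:ℕ):ℂ) := by push_cast; linear_combination h
    have : m = 2 := Nat.cast_injective h2
    omega
  have hM1 : (m:ℂ) - 1 ≠ 0 := by
    intro h
    have h2 : (m:ℂ) = ((1:ℕ):ℂ) := by push_cast; linear_combination h
    have : m = 1 := Nat.cast_injective h2
    omega
  have hMp1 : (m:ℂ) + 1 ≠ 0 := by
    have : ((m+1:ℕ):ℂ) ≠ 0 := Nat.cast_ne_zero.mpr (by omega)
    push_cast at this; intro h; exact this (by linear_combination h)
  have hM21 : (m:ℂ)^2 - 1 ≠ 0 := by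
    intro h
    exact mul_ne_zero hM1 hMp1 (by linear_combination h)
  have hN2 : (n:ℂ) + 2 ≠ 0 := by
    have : ((n+2:ℕ):ℂ) ≠ 0 := Nat.cast_ne_zero.mpr (by omega)
    push_cast at this; intro h; exact this (by linear_combination h)
  have hMN : (m:ℂ) - n ≠ 0 := by
    intro h
    have h2 : (m:ℂ) = ((n:ℕ):ℂ) := by push_cast; linear_combination h
    exact hmn (Nat.cast_injective h2)
  have hMpN : (m:ℂ) + n ≠ 0 := by
    have : ((m+n:ℕ):ℂ) ≠ 0 := Nat.cast_ne_zero.mpr (by omega)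
    push_cast at this; intro h; exact this (by linear_combination h)
  have hD0 : 2*(n:ℂ) - 2*m + m*n ≠ 0 := by
    have hlt : 2*m < 2*n + m*n := by nlinarith
    intro h
    have h2 : ((2*n + m*n:ℕ):ℂ) = ((2*m:ℕ):ℂ) := by push_cast; linear_combination h
    have : 2*n + m*n = 2*m := Nat.cast_injective h2
    omega
  have hD : ((m:ℂ)-2)*((n:ℂ)+2)*(2*(n:ℂ)-2*m+m*n) ≠ 0 :=
    mul_ne_zero (mul_ne_zero hM2 hN2) hD0
  constructor
  · rintro ⟨h1, h2⟩
    have hl : l ≠ 0 := by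
      rintro rfl
      apply mul_ne_zero hM1 hMp1
      linear_combination -h1
    have key : l * (((m:ℂ)+n) * (c*((m:ℂ)-n) + ((m:ℂ)-1)*((n:ℂ)+1)*((n:ℂ)-m+m*n))) = 0 := by
      linear_combination ((n:ℂ)^2-1)/3 * h1 + ((m:ℂ)^2-1)/3 * h2
    have hc' : c*((m:ℂ)-n) + ((m:ℂ)-1)*((n:ℂ)+1)*((n:ℂ)-m+m*n) = 0 := by
      rcases mul_eq_zero.mp key with h | h
      · exact absurd h hl
      · rcases mul_eq_zero.mp h with h' | h'
        · exact absurd h' hMpN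
        · exact h'
    have hc : c = -(((m:ℂ)-1)*((n:ℂ)+1)*((n:ℂ)-m+m*n))/((m:ℂ)-n) := by
      rw [eq_div_iff hMN]
      linear_combination hc'
    refine ⟨hc, ?_⟩
    have h1' : (l * (((m:ℂ)-2)*((n:ℂ)+2)*(2*(n:ℂ)-2*m+m*n)) - ((n:ℂ)-m)) * ((m:ℂ)^2-1) = 0 := by
      linear_combination -((m:ℂ)-(n:ℂ))*h1 + l*((m:ℂ)-2)*((m:ℂ)+2)*hc'
    have h1'' : l * (((m:ℂ)-2)*((n:ℂ)+2)*(2*(n:ℂ)-2*m+m*n)) - ((n:ℂ)-m) = 0 :=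
      (mul_eq_zero.mp h1').resolve_right hM21
    rw [eq_div_iff hD]
    linear_combination h1''
  · rintro ⟨hc, hl⟩
    subst hc hl
    constructor
    · have hD0' : 2*((n:ℂ)-m)+m*n ≠ 0 := by rw [show 2*((n:ℂ)-m)+m*n = 2*(n:ℂ)-2*m+m*n by ring]; exact hD0
      field_simp
      ring
    · have hD0' : 2*((n:ℂ)-m)+m*n ≠ 0 := by rw [show 2*((n:ℂ)-m)+m*n = 2*(n:ℂ)-2*m+m*n by ring]; exact hD0
      field_simp
      ring
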